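/- Let X be a compact metric space containing a free interval. If f : X → X is continuous and weakly mixing, then the topological entropy of f is positive. -/

import Mathlib

/-- `f` is topologically transitive. -/
def TopTransitive {X : Type*} [TopologicalSpace X] (f : X → X) : Prop :=
  ∀ U V : Set X, IsOpen U → IsOpen V → U.Nonempty → V.Nonempty →
    ∃ k : ℕ, (f^[k] '' U ∩ V).Nonempty

/-- `f` is topologically mixing. -/
def TopMixing {X : Type*} [TopologicalSpace X] (f : X → X) : Prop :=
  ∀ U V : Set X, IsOpen U → IsOpen V → U.Nonempty → V.Nonempty →
    ∃ N : ℕ, ∀ n ≥ N, (f^[n] '' U ∩ V).Nonempty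

/-- `X` contains a free interval: an open subset homeomorphic to `(0,1) ⊆ ℝ`. -/
def HasFreeInterval (X : Type*) [TopologicalSpace X] : Prop :=
  ∃ J : Set X, IsOpen J ∧ Nonempty (J ≃ₜ Set.Ioo (0 : ℝ) 1)

/-- `f` is weakly mixing: `f × f` is transitive. -/
def WeaklyMixing {X : Type*} [TopologicalSpace X] (f : X → X) : Prop :=
  TopTransitive (fun p : X × X => (f p.1, f p.2))



open Set Dynamics Topology Filter

namespace E12

/-! ### Exact covering lemma (1D IVT) -/

-- monotone-order version
lemma exact_cov_aux {g : ℝ → ℝ} {p q b1 b2 : ℝ} (hpq : p ≤ q)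
    (hg : ContinuousOn g (Icc p q)) (hgp : g p ≤ b1) (hgq : b2 ≤ g q) (hb : b1 ≤ b2) :
    ∃ s1 s2, s1 ≤ s2 ∧ Icc s1 s2 ⊆ Icc p q ∧ g '' Icc s1 s2 = Icc b1 b2 := by
  have hIVT : Icc (g p) (g q) ⊆ g '' Icc p q := intermediate_value_Icc hpq hg
  set A := Icc p q ∩ g ⁻¹' {b2} with hA
  have hAne : A.Nonempty := by
    obtain ⟨t, ht, hgt⟩ := hIVT ⟨le_trans hgp hb, hgq⟩
    exact ⟨t, ht, hgt⟩
  have hAclosed : IsClosed A := hg.preimage_isClosed_of_isClosed isClosed_Icc isClosed_singleton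
  have hAbdd : BddBelow A := ⟨p, fun x hx => hx.1.1⟩
  set s2 := sInf A with hs2def
  have hs2A : s2 ∈ A := hAclosed.csInf_mem hAne hAbdd
  have hgs2 : g s2 = b2 := hs2A.2
  have hps2 : p ≤ s2 := hs2A.1.1
  have hs2q : s2 ≤ q := hs2A.1.2
  have hlbA : ∀ t ∈ A, s2 ≤ t := fun t ht => csInf_le hAbdd ht
  set B := Icc p s2 ∩ g ⁻¹' {b1} with hB
  have hBne : B.Nonempty := by
    have : Icc (g p) (g s2) ⊆ g '' Icc p s2 :=
      intermediate_value_Icc hps2 (hg.mono (Icc_subset_Icc_right hs2q))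
    obtain ⟨t, ht, hgt⟩ := this ⟨hgp, by rw [hgs2]; exact hb⟩
    exact ⟨t, ht, hgt⟩
  have hBclosed : IsClosed B :=
    (hg.mono (Icc_subset_Icc_right hs2q)).preimage_isClosed_of_isClosed isClosed_Icc
      isClosed_singleton
  have hBbdd : BddAbove B := ⟨s2, fun x hx => hx.1.2⟩
  set s1 := sSup B with hs1def
  have hs1B : s1 ∈ B := hBclosed.csSup_mem hBne hBbdd
  have hgs1 : g s1 = b1 := hs1B.2
  have hps1 : p ≤ s1 := hs1B.1.1
  have hs1s2 : s1 ≤ s2 := hs1B.1.2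
  have hubB : ∀ t ∈ B, t ≤ s1 := fun t ht => le_csSup hBbdd ht
  have hsub : Icc s1 s2 ⊆ Icc p q := fun t ht => ⟨le_trans hps1 ht.1, le_trans ht.2 hs2q⟩
  have hgsub : ContinuousOn g (Icc s1 s2) := hg.mono hsub
  refine ⟨s1, s2, hs1s2, hsub, ?_⟩
  apply Subset.antisymm
  · rintro y ⟨t, ht, rfl⟩
    constructor
    · by_contra hlt
      push_neg at hlt
      have hts2 : t ≤ s2 := ht.2
      have : Icc (g t) (g s2) ⊆ g '' Icc t s2 :=
        intermediate_value_Icc hts2 (hg.mono (fun u hu => ⟨le_trans (hsub ht).1 hu.1, le_trans hu.2 hs2q⟩))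
      obtain ⟨t', ht', hgt'⟩ := this ⟨le_of_lt hlt, by rw [hgs2]; exact hb⟩
      have ht'B : t' ∈ B := ⟨⟨le_trans (hsub ht).1 ht'.1, ht'.2⟩, hgt'⟩
      have h1 : t' ≤ s1 := hubB t' ht'B
      rcases eq_or_lt_of_le ht.1 with heq | hltt
      · rw [← heq] at hlt; rw [hgs1] at hlt; exact absurd hlt (lt_irrefl b1)
      · exact absurd (lt_of_lt_of_le hltt ht'.1) (not_lt.mpr h1)
    · by_contra hlt
      push_neg at hlt
      have hs1t : s1 ≤ t := ht.1
      have : Icc (g s1) (g t) ⊆ g '' Icc s1 t :=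
        intermediate_value_Icc hs1t (hg.mono (fun u hu => ⟨le_trans hps1 hu.1, le_trans hu.2 (le_trans ht.2 hs2q)⟩))
      obtain ⟨t'', ht'', hgt''⟩ := this ⟨by rw [hgs1]; exact hb, le_of_lt hlt⟩
      have ht''A : t'' ∈ A := ⟨⟨le_trans hps1 ht''.1, le_trans ht''.2 (le_trans ht.2 hs2q)⟩, hgt''⟩
      have h2 : s2 ≤ t'' := hlbA t'' ht''A
      rcases eq_or_lt_of_le ht.2 with heq | hltt
      · rw [heq] at hlt; rw [hgs2] at hlt; exact absurd hlt (lt_irrefl b2)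
      · exact absurd (lt_of_le_of_lt ht''.2 hltt) (not_lt.mpr h2)
  · have : Icc (g s1) (g s2) ⊆ g '' Icc s1 s2 := intermediate_value_Icc hs1s2 hgsub
    rw [hgs1, hgs2] at this
    exact this

lemma exact_cov {g : ℝ → ℝ} {α β b1 b2 : ℝ} (hg : ContinuousOn g (Icc α β))
    {p q : ℝ} (hp : p ∈ Icc α β) (hq : q ∈ Icc α β)
    (hgp : g p ≤ b1) (hgq : b2 ≤ g q) (hb : b1 ≤ b2) :
    ∃ s1 s2, s1 ≤ s2 ∧ Icc s1 s2 ⊆ Icc α β ∧ g '' Icc s1 s2 = Icc b1 b2 := by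
  rcases le_total p q with hpq | hqp
  · have hsub : Icc p q ⊆ Icc α β := Icc_subset_Icc hp.1 hq.2
    obtain ⟨s1, s2, h1, h2, h3⟩ := exact_cov_aux hpq (hg.mono hsub) hgp hgq hb
    exact ⟨s1, s2, h1, h2.trans hsub, h3⟩
  · have hsub : Icc q p ⊆ Icc α β := Icc_subset_Icc hq.1 hp.2
    have hg' : ContinuousOn (fun t => b1 + b2 - g t) (Icc q p) :=
      continuousOn_const.sub (hg.mono hsub)
    have h1' : (fun t => b1 + b2 - g t) q ≤ b1 := by simp only; linarith
    have h2' : b2 ≤ (fun t => b1 + b2 - g t) p := by simp only; linarith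
    obtain ⟨s1, s2, h1, h2, h3⟩ := exact_cov_aux hqp hg' h1' h2' hb
    refine ⟨s1, s2, h1, h2.trans hsub, ?_⟩
    have himg : g '' Icc s1 s2 = (fun y => b1 + b2 - y) '' ((fun t => b1 + b2 - g t) '' Icc s1 s2) := by
      rw [← Set.image_comp]
      apply Set.image_congr
      intro t _
      simp only [Function.comp_apply]
      ring
    rw [himg, h3, Set.image_const_sub_Icc]
    norm_num

section Chart

variable {X : Type*} [MetricSpace X] [CompactSpace X]
variable (f : X → X) (J : Set X) (e : J ≃ₜ Set.Ioo (0:ℝ) 1)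

open Classical in
noncomputable def ι : ℝ → X := fun t =>
  if h : t ∈ Set.Ioo (0:ℝ) 1 then (e.symm ⟨t, h⟩ : X) else (e.symm ⟨1/2, by norm_num⟩ : X)

open Classical in
noncomputable def Φ : X → ℝ := fun x =>
  if h : x ∈ J then ((e ⟨x, h⟩ : Set.Ioo (0:ℝ) 1) : ℝ) else 0

variable {J e}

lemma iota_mem {t : ℝ} (ht : t ∈ Ioo (0:ℝ) 1) : ι J e t ∈ J := by
  simp only [ι, dif_pos ht]
  exact (e.symm ⟨t, ht⟩).2

lemma Phi_iota {t : ℝ} (ht : t ∈ Ioo (0:ℝ) 1) : Φ J e (ι J e t) = t := by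
  have hJm : ι J e t ∈ J := iota_mem ht
  have h1 : ι J e t = (e.symm ⟨t, ht⟩ : X) := dif_pos ht
  simp only [Φ, dif_pos hJm]
  have h2 : (⟨ι J e t, hJm⟩ : J) = e.symm ⟨t, ht⟩ := Subtype.ext h1
  rw [h2, Homeomorph.apply_symm_apply]

lemma Phi_mem' {x : X} (hx : x ∈ J) : Φ J e x ∈ Ioo (0:ℝ) 1 := by
  simp only [Φ, dif_pos hx]
  exact (e ⟨x, hx⟩).2

lemma iota_Phi {x : X} (hx : x ∈ J) : ι J e (Φ J e x) = x := by
  have hm : Φ J e x ∈ Ioo (0:ℝ) 1 := Phi_mem' hx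
  simp only [ι, dif_pos hm]
  have h2 : (⟨Φ J e x, hm⟩ : Set.Ioo (0:ℝ) 1) = e ⟨x, hx⟩ := by
    apply Subtype.ext
    simp only [Φ, dif_pos hx]
  rw [h2, Homeomorph.symm_apply_apply]

lemma Phi_mem {x : X} (hx : x ∈ J) : Φ J e x ∈ Ioo (0:ℝ) 1 := Phi_mem' hx

lemma iota_inj : InjOn (ι J e) (Ioo (0:ℝ) 1) := by
  intro s hs t ht h
  have := Phi_iota (e := e) hs
  rw [h, Phi_iota (e := e) ht] at this
  exact this.symm

lemma iota_cont : ContinuousOn (ι J e) (Ioo (0:ℝ) 1) := by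
  rw [continuousOn_iff_continuous_restrict]
  have : Set.domRestrict (Ioo (0:ℝ) 1) (ι J e) = Subtype.val ∘ ⇑e.symm := by
    funext u
    simp only [Set.restrict_apply, Function.comp_apply, ι, dif_pos u.2]
  rw [this]
  exact continuous_subtype_val.comp e.symm.continuous

lemma Phi_cont : ContinuousOn (Φ J e) J := by
  rw [continuousOn_iff_continuous_restrict]
  have : Set.domRestrict J (Φ J e) = Subtype.val ∘ ⇑e := by
    funext u
    simp only [Set.restrict_apply, Function.comp_apply, Φ, dif_pos u.2]
  rw [this]
  exact continuous_subtype_val.comp e.continuous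

lemma iota_open (hJ : IsOpen J) {a b : ℝ} (ha : 0 ≤ a) (hb : b ≤ 1) :
    IsOpen (ι J e '' Ioo a b) := by
  have hsub : Ioo a b ⊆ Ioo (0:ℝ) 1 := Ioo_subset_Ioo ha hb
  have himg : ι J e '' Ioo a b =
      Subtype.val '' (⇑e.symm '' (Subtype.val ⁻¹' (Ioo a b) : Set (Set.Ioo (0:ℝ) 1))) := by
    ext x
    constructor
    · rintro ⟨t, ht, rfl⟩
      have ht1 := hsub ht
      exact ⟨e.symm ⟨t, ht1⟩, ⟨⟨t, ht1⟩, ht, rfl⟩, by simp only [ι, dif_pos ht1]⟩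
    · rintro ⟨y, ⟨u, hu, rfl⟩, rfl⟩
      exact ⟨u.1, hu, by simp only [ι, dif_pos u.2, Subtype.coe_eta]⟩
  rw [himg]
  apply hJ.isOpenMap_subtype_val
  rw [Homeomorph.isOpen_image]
  exact isOpen_Ioo.preimage continuous_subtype_val

/-! ### The covering relation -/

variable (J e) in
/-- `Cov m p1 p2 q1 q2`: some compact subarc of `(p1,p2)` is mapped by `f^[m]`
exactly onto the arc `ι [q1,q2]`. -/
def Cov (m : ℕ) (p1 p2 q1 q2 : ℝ) : Prop :=
  ∃ s1 s2, p1 < s1 ∧ s1 ≤ s2 ∧ s2 < p2 ∧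
    f^[m] '' (ι J e '' Icc s1 s2) = ι J e '' Icc q1 q2

variable {f}

lemma cov_zero {a1 a2 p1 p2 : ℝ} (h1 : a1 < p1) (h2 : p1 ≤ p2) (h3 : p2 < a2) :
    Cov f J e 0 a1 a2 p1 p2 := by
  exact ⟨p1, p2, h1, h2, h3, by simp⟩

lemma exact_to_cov {m : ℕ} {s1 s2 b1 b2 : ℝ} (hsub : Icc s1 s2 ⊆ Ioo (0:ℝ) 1)
    (hmem : ∀ t ∈ Icc s1 s2, f^[m] (ι J e t) ∈ J)
    (himg : (fun t => Φ J e (f^[m] (ι J e t))) '' Icc s1 s2 = Icc b1 b2) :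
    f^[m] '' (ι J e '' Icc s1 s2) = ι J e '' Icc b1 b2 := by
  ext y
  constructor
  · rintro ⟨x, ⟨t, ht, rfl⟩, rfl⟩
    have hJm := hmem t ht
    have hmem2 : Φ J e (f^[m] (ι J e t)) ∈ Icc b1 b2 := by
      rw [← himg]; exact mem_image_of_mem _ ht
    exact ⟨_, hmem2, iota_Phi hJm⟩
  · rintro ⟨u, hu, rfl⟩
    rw [← himg] at hu
    obtain ⟨t, ht, rfl⟩ := hu
    exact ⟨ι J e t, mem_image_of_mem _ ht, (iota_Phi (hmem t ht)).symm⟩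

lemma cov_cont (hf : Continuous f) {m : ℕ} {s1 s2 : ℝ} (hsub : Icc s1 s2 ⊆ Ioo (0:ℝ) 1)
    (hmem : ∀ t ∈ Icc s1 s2, f^[m] (ι J e t) ∈ J) :
    ContinuousOn (fun t => Φ J e (f^[m] (ι J e t))) (Icc s1 s2) :=
  Phi_cont.comp ((hf.iterate m).comp_continuousOn (iota_cont.mono hsub)) hmem

lemma cov_comp (hf : Continuous f) {m k : ℕ} {p1 p2 q1 q2 r1 r2 : ℝ}
    (hp1 : 0 ≤ p1) (hp2 : p2 ≤ 1) (hq1 : 0 < q1) (hq : q1 ≤ q2) (hq2 : q2 < 1)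
    (h1 : Cov f J e m p1 p2 q1 q2) (h2 : Cov f J e k q1 q2 r1 r2) :
    Cov f J e (m + k) p1 p2 r1 r2 := by
  obtain ⟨s1, s2, hps1, hs12, hs2p, himg1⟩ := h1
  obtain ⟨u1, u2, hqu1, hu12, hu2q, himg2⟩ := h2
  have hsIoo : Icc s1 s2 ⊆ Ioo (0:ℝ) 1 := fun t ht =>
    ⟨lt_of_le_of_lt hp1 (lt_of_lt_of_le hps1 ht.1), lt_of_le_of_lt ht.2 (lt_of_lt_of_le hs2p hp2)⟩
  have hq12 : Icc q1 q2 ⊆ Ioo (0:ℝ) 1 := fun t ht =>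
    ⟨lt_of_lt_of_le hq1 ht.1, lt_of_le_of_lt ht.2 hq2⟩
  have hmemJ : ∀ t ∈ Icc s1 s2, f^[m] (ι J e t) ∈ J := by
    intro t ht
    have : f^[m] (ι J e t) ∈ ι J e '' Icc q1 q2 := by
      rw [← himg1]; exact mem_image_of_mem _ (mem_image_of_mem _ ht)
    obtain ⟨u, hu, hueq⟩ := this
    rw [← hueq]; exact iota_mem (hq12 hu)
  have hcont := cov_cont hf hsIoo hmemJ
  have himage : (fun t => Φ J e (f^[m] (ι J e t))) '' Icc s1 s2 = Icc q1 q2 := by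
    ext u
    constructor
    · rintro ⟨t, ht, rfl⟩
      have : f^[m] (ι J e t) ∈ ι J e '' Icc q1 q2 := by
        rw [← himg1]; exact mem_image_of_mem _ (mem_image_of_mem _ ht)
      obtain ⟨v, hv, hveq⟩ := this
      simp only
      rw [← hveq, Phi_iota (hq12 hv)]
      exact hv
    · intro hu
      have : ι J e u ∈ f^[m] '' (ι J e '' Icc s1 s2) := by
        rw [himg1]; exact mem_image_of_mem _ hu
      obtain ⟨x, ⟨t, ht, rfl⟩, hteq⟩ := this
      exact ⟨t, ht, by simp only; rw [hteq, Phi_iota (hq12 hu)]⟩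
  have hu1m : u1 ∈ (fun t => Φ J e (f^[m] (ι J e t))) '' Icc s1 s2 := by
    rw [himage]; exact ⟨le_of_lt hqu1, le_trans hu12 (le_of_lt hu2q)⟩
  have hu2m : u2 ∈ (fun t => Φ J e (f^[m] (ι J e t))) '' Icc s1 s2 := by
    rw [himage]; exact ⟨le_trans (le_of_lt hqu1) hu12, le_of_lt hu2q⟩
  obtain ⟨pp, hpp, hppv⟩ := hu1m
  obtain ⟨qq, hqq, hqqv⟩ := hu2m
  obtain ⟨σ1, σ2, hσ12, hσsub, hσimg⟩ :=
    exact_cov hcont hpp hqq (le_of_eq hppv) (le_of_eq hqqv.symm) hu12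
  have hσIoo : Icc σ1 σ2 ⊆ Ioo (0:ℝ) 1 := fun t ht => hsIoo (hσsub ht)
  have hσmem : ∀ t ∈ Icc σ1 σ2, f^[m] (ι J e t) ∈ J := fun t ht => hmemJ t (hσsub ht)
  have hexact := exact_to_cov hσIoo hσmem hσimg
  have hσ1m : σ1 ∈ Icc s1 s2 := hσsub ⟨le_refl _, hσ12⟩
  have hσ2m : σ2 ∈ Icc s1 s2 := hσsub ⟨hσ12, le_refl _⟩
  refine ⟨σ1, σ2, lt_of_lt_of_le hps1 hσ1m.1, hσ12, lt_of_le_of_lt hσ2m.2 hs2p, ?_⟩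
  rw [Nat.add_comm m k, Function.iterate_add, Set.image_comp, hexact, himg2]

/-! ### The hit lemma -/

lemma hit_lemma (hJ : IsOpen J) (hf : Continuous f) {m : ℕ} {p1 p2 x w : ℝ}
    (hp1 : 0 < p1) (hp2 : p2 < 1) (hx : x ∈ Ioo p1 p2)
    (hw : w ∈ Ioo (0:ℝ) 1) (hfx : f^[m] (ι J e x) = ι J e w) :
    (∀ t ∈ Ioo p1 p2, f^[m] (ι J e t) ∈ J) ∨
    (∀ b1 b2 : ℝ, 0 < b1 → b1 ≤ b2 → b2 < w → Cov f J e m p1 p2 b1 b2) ∨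
    (∀ b1 b2 : ℝ, w < b1 → b1 ≤ b2 → b2 < 1 → Cov f J e m p1 p2 b1 b2) := by
  by_cases hFull : ∀ t ∈ Ioo p1 p2, f^[m] (ι J e t) ∈ J
  · exact Or.inl hFull
  push_neg at hFull
  obtain ⟨s0, hs0, hs0n⟩ := hFull
  have hIoosub : Ioo p1 p2 ⊆ Ioo (0:ℝ) 1 := Ioo_subset_Ioo (le_of_lt hp1) (le_of_lt hp2)
  set F : ℝ → X := fun t => f^[m] (ι J e t) with hF
  have hFcont : ContinuousOn F (Ioo p1 p2) :=
    (hf.iterate m).comp_continuousOn (iota_cont.mono hIoosub)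
  set O : Set ℝ := Ioo p1 p2 ∩ F ⁻¹' J with hOdef
  have hOopen : IsOpen O := hFcont.isOpen_inter_preimage isOpen_Ioo hJ
  have hxO : x ∈ O := ⟨hx, by simp only [hF, mem_preimage]; rw [hfx]; exact iota_mem hw⟩
  have hgx : Φ J e (F x) = w := by rw [hF]; simp only; rw [hfx, Phi_iota hw]
  have hs0x : s0 ≠ x := fun h => hs0n (h ▸ hxO).2
  -- the dichotomy machine, parametrized by a one-sided piece P with escape endpoint c
  have main : ∀ P : Set ℝ, x ∈ P → P ⊆ O → (IsCompact (closure P)) →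
      (∀ t ∈ P, p1 < t) → (∀ t ∈ P, t < p2) →
      (∀ t u, t ∈ P → u ∈ P → Icc t u ⊆ P) →
      (∃ c, c ∈ closure P ∧ c ∉ O ∧ c ∈ Ioo p1 p2 ∧ (𝓝[P] c).NeBot) →
      (∀ b1 b2 : ℝ, 0 < b1 → b1 ≤ b2 → b2 < w → Cov f J e m p1 p2 b1 b2) ∨
      (∀ b1 b2 : ℝ, w < b1 → b1 ≤ b2 → b2 < 1 → Cov f J e m p1 p2 b1 b2) := by
    intro P hxP hPO _ hPp1 hPp2 hPconv ⟨c, _, hcO, hcIoo, hcne⟩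
    have hPIoo : P ⊆ Ioo p1 p2 := fun t ht => ⟨hPp1 t ht, hPp2 t ht⟩
    have hmemP : ∀ t ∈ P, F t ∈ J := fun t ht => (hPO ht).2
    by_cases hLo : ∀ ε > (0:ℝ), ∃ t ∈ P, Φ J e (F t) < ε
    · left
      intro b1 b2 hb1 hb hb2
      obtain ⟨t, htP, hlt⟩ := hLo b1 hb1
      have hIccP : Icc (min t x) (max t x) ⊆ P := by
        rcases le_total t x with h | h
        · rw [min_eq_left h, max_eq_right h]; exact hPconv t x htP hxP
        · rw [min_eq_right h, max_eq_left h]; exact hPconv x t hxP htP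
      have hsub01 : Icc (min t x) (max t x) ⊆ Ioo (0:ℝ) 1 :=
        fun u hu => hIoosub (hPIoo (hIccP hu))
      have hmemJ' : ∀ u ∈ Icc (min t x) (max t x), f^[m] (ι J e u) ∈ J :=
        fun u hu => hmemP u (hIccP hu)
      have hcont := cov_cont hf hsub01 hmemJ'
      have htm : t ∈ Icc (min t x) (max t x) := ⟨min_le_left _ _, le_max_left _ _⟩
      have hxm : x ∈ Icc (min t x) (max t x) := ⟨min_le_right _ _, le_max_right _ _⟩
      obtain ⟨σ1, σ2, hσ12, hσsub, hσimg⟩ :=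
        exact_cov hcont htm hxm (le_of_lt hlt) (by rw [hgx]; exact le_of_lt hb2) hb
      refine ⟨σ1, σ2, hPp1 σ1 (hIccP (hσsub ⟨le_refl _, hσ12⟩)),
        hσ12, hPp2 σ2 (hIccP (hσsub ⟨hσ12, le_refl _⟩)), ?_⟩
      exact exact_to_cov (fun u hu => hsub01 (hσsub hu))
        (fun u hu => hmemJ' u (hσsub hu)) hσimg
    · by_cases hHi : ∀ ε > (0:ℝ), ∃ t ∈ P, 1 - ε < Φ J e (F t)
      · right
        intro b1 b2 hb1 hb hb2
        obtain ⟨t, htP, hgt⟩ := hHi (1 - b2) (by linarith)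
        have hgt' : b2 < Φ J e (F t) := by linarith
        have hIccP : Icc (min t x) (max t x) ⊆ P := by
          rcases le_total t x with h | h
          · rw [min_eq_left h, max_eq_right h]; exact hPconv t x htP hxP
          · rw [min_eq_right h, max_eq_left h]; exact hPconv x t hxP htP
        have hsub01 : Icc (min t x) (max t x) ⊆ Ioo (0:ℝ) 1 :=
          fun u hu => hIoosub (hPIoo (hIccP hu))
        have hmemJ' : ∀ u ∈ Icc (min t x) (max t x), f^[m] (ι J e u) ∈ J :=
          fun u hu => hmemP u (hIccP hu)
        have hcont := cov_cont hf hsub01 hmemJ'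
        have htm : t ∈ Icc (min t x) (max t x) := ⟨min_le_left _ _, le_max_left _ _⟩
        have hxm : x ∈ Icc (min t x) (max t x) := ⟨min_le_right _ _, le_max_right _ _⟩
        obtain ⟨σ1, σ2, hσ12, hσsub, hσimg⟩ :=
          exact_cov hcont hxm htm (by rw [hgx]; exact le_of_lt hb1) (le_of_lt hgt') hb
        refine ⟨σ1, σ2, hPp1 σ1 (hIccP (hσsub ⟨le_refl _, hσ12⟩)),
          hσ12, hPp2 σ2 (hIccP (hσsub ⟨hσ12, le_refl _⟩)), ?_⟩
        exact exact_to_cov (fun u hu => hsub01 (hσsub hu))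
          (fun u hu => hmemJ' u (hσsub hu)) hσimg
      · exfalso
        push_neg at hLo hHi
        obtain ⟨ε1, hε1, hno1⟩ := hLo
        obtain ⟨ε2, hε2, hno2⟩ := hHi
        set ε := min ε1 ε2 with hε
        have hεpos : 0 < ε := lt_min hε1 hε2
        have hKsub : Icc ε (1 - ε) ⊆ Ioo (0:ℝ) 1 :=
          fun u hu => ⟨lt_of_lt_of_le hεpos hu.1, lt_of_le_of_lt hu.2 (by linarith)⟩
        have hKcomp : IsCompact (ι J e '' Icc ε (1 - ε)) :=
          isCompact_Icc.image_of_continuousOn (iota_cont.mono hKsub)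
        have hKJ : ι J e '' Icc ε (1 - ε) ⊆ J := by
          rintro _ ⟨u, hu, rfl⟩; exact iota_mem (hKsub hu)
        have hKc : ∀ t ∈ P, F t ∈ ι J e '' Icc ε (1 - ε) := by
          intro t ht
          refine ⟨Φ J e (F t), ⟨le_trans (min_le_left _ _) (hno1 t ht), ?_⟩,
            iota_Phi (hmemP t ht)⟩
          have := hno2 t ht
          have : Φ J e (F t) ≤ 1 - ε2 := by linarith
          linarith [min_le_right ε1 ε2]
        have htend : Filter.Tendsto F (nhdsWithin c P) (nhds (F c)) :=
          ((hFcont.continuousAt (isOpen_Ioo.mem_nhds hcIoo)).continuousWithinAt)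
        haveI := hcne
        have hFc : F c ∈ ι J e '' Icc ε (1 - ε) := by
          apply hKcomp.isClosed.mem_of_tendsto htend
          filter_upwards [eventually_mem_nhdsWithin] with t ht
          exact hKc t ht
        exact hcO ⟨hcIoo, hKJ hFc⟩
  -- now build the piece P depending on the side of s0
  rcases lt_or_gt_of_ne hs0x with hlt | hgt
  · -- s0 < x : piece is Ioc c x
    set S := Icc s0 x ∩ Oᶜ with hS
    have hSne : S.Nonempty := ⟨s0, ⟨le_refl _, le_of_lt hlt⟩, fun h => hs0n h.2⟩
    have hSbdd : BddAbove S := ⟨x, fun u hu => hu.1.2⟩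
    have hSclosed : IsClosed S := isClosed_Icc.inter (isClosed_compl_iff.mpr hOopen)
    set c := sSup S with hc
    have hcS : c ∈ S := hSclosed.csSup_mem hSne hSbdd
    have hcx : c < x := lt_of_le_of_ne hcS.1.2 (fun h => hcS.2 (h ▸ hxO))
    have hioc : ∀ t ∈ Ioc c x, t ∈ O := by
      intro t ht
      by_contra htn
      have htS : t ∈ S := ⟨⟨le_trans hcS.1.1 (le_of_lt ht.1), ht.2⟩, htn⟩
      exact absurd (le_csSup hSbdd htS) (not_le.mpr ht.1)
    have hcIoo : c ∈ Ioo p1 p2 := ⟨lt_of_lt_of_le hs0.1 hcS.1.1, lt_of_lt_of_le hcx (le_of_lt hx.2)⟩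
    have hres := main (Ioc c x) ⟨hcx, le_refl _⟩ hioc
      (by rw [closure_Ioc (ne_of_lt hcx)]; exact isCompact_Icc)
      (fun t ht => lt_of_lt_of_le hcIoo.1 (le_of_lt ht.1))
      (fun t ht => lt_of_le_of_lt ht.2 hx.2)
      (fun t u ht hu v hv => ⟨lt_of_lt_of_le ht.1 hv.1, le_trans hv.2 hu.2⟩)
      ⟨c, by rw [closure_Ioc (ne_of_lt hcx)]; exact ⟨le_refl _, le_of_lt hcx⟩,
        hcS.2, hcIoo, by
          rw [← mem_closure_iff_nhdsWithin_neBot, closure_Ioc (ne_of_lt hcx)]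
          exact ⟨le_refl _, le_of_lt hcx⟩⟩
    tauto
  · -- x < s0 : piece is Ico x c
    set S := Icc x s0 ∩ Oᶜ with hS
    have hSne : S.Nonempty := ⟨s0, ⟨le_of_lt hgt, le_refl _⟩, fun h => hs0n h.2⟩
    have hSbdd : BddBelow S := ⟨x, fun u hu => hu.1.1⟩
    have hSclosed : IsClosed S := isClosed_Icc.inter (isClosed_compl_iff.mpr hOopen)
    set c := sInf S with hc
    have hcS : c ∈ S := hSclosed.csInf_mem hSne hSbdd
    have hcx : x < c := lt_of_le_of_ne hcS.1.1 (fun h => hcS.2 (h ▸ hxO))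
    have hico : ∀ t ∈ Ico x c, t ∈ O := by
      intro t ht
      by_contra htn
      have htS : t ∈ S := ⟨⟨ht.1, le_trans (le_of_lt ht.2) hcS.1.2⟩, htn⟩
      exact absurd (csInf_le hSbdd htS) (not_le.mpr ht.2)
    have hcIoo : c ∈ Ioo p1 p2 :=
      ⟨lt_of_lt_of_le hx.1 (le_of_lt hcx), lt_of_le_of_lt hcS.1.2 hs0.2⟩
    have hres := main (Ico x c) ⟨le_refl _, hcx⟩ hico
      (by rw [closure_Ico (ne_of_lt hcx)]; exact isCompact_Icc)
      (fun t ht => lt_of_lt_of_le hx.1 ht.1)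
      (fun t ht => lt_of_lt_of_le (lt_of_lt_of_le ht.2 hcS.1.2) (le_of_lt hs0.2))
      (fun t u ht hu v hv => ⟨le_trans ht.1 hv.1, lt_of_le_of_lt hv.2 hu.2⟩)
      ⟨c, by rw [closure_Ico (ne_of_lt hcx)]; exact ⟨le_of_lt hcx, le_refl _⟩,
        hcS.2, hcIoo, by
          rw [← mem_closure_iff_nhdsWithin_neBot, closure_Ico (ne_of_lt hcx)]
          exact ⟨le_of_lt hcx, le_refl _⟩⟩
    tauto

lemma full_lemma (hf : Continuous f) {m : ℕ} {p1 p2 x x' w w' : ℝ}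
    (hp1 : 0 < p1) (hp2 : p2 < 1)
    (hfull : ∀ t ∈ Ioo p1 p2, f^[m] (ι J e t) ∈ J)
    (hx : x ∈ Ioo p1 p2) (hx' : x' ∈ Ioo p1 p2)
    (hw : w ∈ Ioo (0:ℝ) 1) (hw' : w' ∈ Ioo (0:ℝ) 1)
    (hfx : f^[m] (ι J e x) = ι J e w) (hfx' : f^[m] (ι J e x') = ι J e w')
    {b1 b2 : ℝ} (hb1 : w' < b1) (hb : b1 ≤ b2) (hb2 : b2 < w) :
    Cov f J e m p1 p2 b1 b2 := by
  have hIoosub : Ioo p1 p2 ⊆ Ioo (0:ℝ) 1 := Ioo_subset_Ioo (le_of_lt hp1) (le_of_lt hp2)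
  have hIccP : Icc (min x' x) (max x' x) ⊆ Ioo p1 p2 := by
    intro u hu
    rcases le_total x' x with h | h
    · rw [min_eq_left h, max_eq_right h] at hu
      exact ⟨lt_of_lt_of_le hx'.1 hu.1, lt_of_le_of_lt hu.2 hx.2⟩
    · rw [min_eq_right h, max_eq_left h] at hu
      exact ⟨lt_of_lt_of_le hx.1 hu.1, lt_of_le_of_lt hu.2 hx'.2⟩
  have hsub01 : Icc (min x' x) (max x' x) ⊆ Ioo (0:ℝ) 1 := fun u hu => hIoosub (hIccP hu)
  have hmemJ' : ∀ u ∈ Icc (min x' x) (max x' x), f^[m] (ι J e u) ∈ J :=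
    fun u hu => hfull u (hIccP hu)
  have hcont := cov_cont hf hsub01 hmemJ'
  have hx'm : x' ∈ Icc (min x' x) (max x' x) := ⟨min_le_left _ _, le_max_left _ _⟩
  have hxm : x ∈ Icc (min x' x) (max x' x) := ⟨min_le_right _ _, le_max_right _ _⟩
  have hgx : Φ J e (f^[m] (ι J e x)) = w := by rw [hfx, Phi_iota hw]
  have hgx' : Φ J e (f^[m] (ι J e x')) = w' := by rw [hfx', Phi_iota hw']
  obtain ⟨σ1, σ2, hσ12, hσsub, hσimg⟩ :=
    exact_cov hcont hx'm hxm
      (by show Φ J e (f^[m] (ι J e x')) ≤ b1; rw [hgx']; exact le_of_lt hb1)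
      (by show b2 ≤ Φ J e (f^[m] (ι J e x)); rw [hgx]; exact le_of_lt hb2) hb
  refine ⟨σ1, σ2, (hIccP (hσsub ⟨le_refl _, hσ12⟩)).1, hσ12,
    (hIccP (hσsub ⟨hσ12, le_refl _⟩)).2, ?_⟩
  exact exact_to_cov (fun u hu => hsub01 (hσsub hu)) (fun u hu => hmemJ' u (hσsub hu)) hσimg

/-! ### Weak mixing: simultaneous hitting -/

lemma simul (hwm : WeaklyMixing f) {U V V' : Set X} (hU : IsOpen U) (hV : IsOpen V)
    (hV' : IsOpen V') (hUn : U.Nonempty) (hVn : V.Nonempty) (hV'n : V'.Nonempty) :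
    ∃ m : ℕ, ∃ x ∈ U, ∃ x' ∈ U, f^[m] x ∈ V ∧ f^[m] x' ∈ V' := by
  have hiter : ∀ (k : ℕ) (p : X × X),
      (fun p : X × X => (f p.1, f p.2))^[k] p = (f^[k] p.1, f^[k] p.2) := by
    intro k
    induction k with
    | zero => intro p; simp
    | succ k ih =>
      intro p
      rw [Function.iterate_succ_apply', Function.iterate_succ_apply',
        Function.iterate_succ_apply', ih]
  obtain ⟨k, z, hz1, hz2⟩ := hwm (U ×ˢ U) (V ×ˢ V') (hU.prod hU) (hV.prod hV')
    (hUn.prod hUn) (hVn.prod hV'n)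
  obtain ⟨p, hp, hpe⟩ := hz1
  rw [hiter] at hpe
  refine ⟨k, p.1, hp.1, p.2, hp.2, ?_, ?_⟩
  · have := hz2.1; rw [← hpe] at this; exact this
  · have := hz2.2; rw [← hpe] at this; exact this

/-! ### The side lemma -/

lemma side_lemma (hJ : IsOpen J) (hf : Continuous f) (hwm : WeaklyMixing f)
    {p1 p2 : ℝ} (hp1 : 0 < p1) (hp : p1 < p2) (hp2 : p2 < 1) :
    (∀ b1 b2 : ℝ, 0.05 < b1 → b1 ≤ b2 → b2 < 0.45 → ∃ m, Cov f J e m p1 p2 b1 b2) ∨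
    (∀ b1 b2 : ℝ, 0.55 < b1 → b1 ≤ b2 → b2 < 0.93 → ∃ m, Cov f J e m p1 p2 b1 b2) := by
  have hne : ∀ a b : ℝ, 0 ≤ a → a < b → b ≤ 1 → (ι J e '' Ioo a b).Nonempty := by
    intro a b ha hab hb
    exact ⟨ι J e ((a + b) / 2), mem_image_of_mem _ ⟨by linarith, by linarith⟩⟩
  obtain ⟨m, x0, hx0, x0', hx0', hfx0, hfx0'⟩ := simul hwm
    (iota_open (e := e) hJ (le_of_lt hp1) (le_of_lt hp2))
    (iota_open (e := e) hJ (by norm_num : (0:ℝ) ≤ 0.94) (by norm_num : (0.96:ℝ) ≤ 1))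
    (iota_open (e := e) hJ (by norm_num : (0:ℝ) ≤ 0.49) (by norm_num : (0.51:ℝ) ≤ 1))
    (hne p1 p2 (le_of_lt hp1) hp (le_of_lt hp2))
    (hne 0.94 0.96 (by norm_num) (by norm_num) (by norm_num))
    (hne 0.49 0.51 (by norm_num) (by norm_num) (by norm_num))
  obtain ⟨x, hx, rfl⟩ := hx0
  obtain ⟨x', hx', rfl⟩ := hx0'
  obtain ⟨w, hwm2, hweq⟩ := hfx0
  obtain ⟨w', hw'm2, hw'eq⟩ := hfx0'
  have hwIoo : w ∈ Ioo (0:ℝ) 1 := ⟨by linarith [hwm2.1], by linarith [hwm2.2]⟩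
  have hw'Ioo : w' ∈ Ioo (0:ℝ) 1 := ⟨by linarith [hw'm2.1], by linarith [hw'm2.2]⟩
  rcases hit_lemma hJ hf hp1 hp2 hx hwIoo hweq.symm with hFull | hLo | hHi
  · right
    intro b1 b2 h1 h2 h3
    exact ⟨m, full_lemma hf hp1 hp2 hFull hx hx' hwIoo hw'Ioo hweq.symm hw'eq.symm
      (by linarith [hw'm2.2]) h2 (by linarith [hwm2.1])⟩
  · left
    intro b1 b2 h1 h2 h3
    exact ⟨m, hLo b1 b2 (by linarith) h2 (by linarith [hwm2.1])⟩
  · rcases hit_lemma hJ hf hp1 hp2 hx' hw'Ioo hw'eq.symm with hFull | hLo' | hHi'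
    · right
      intro b1 b2 h1 h2 h3
      exact ⟨m, full_lemma hf hp1 hp2 hFull hx hx' hwIoo hw'Ioo hweq.symm hw'eq.symm
        (by linarith [hw'm2.2]) h2 (by linarith [hwm2.1])⟩
    · left
      intro b1 b2 h1 h2 h3
      exact ⟨m, hLo' b1 b2 (by linarith) h2 (by linarith [hw'm2.1])⟩
    · right
      intro b1 b2 h1 h2 h3
      exact ⟨m, hHi' b1 b2 (by linarith [hw'm2.2]) h2 (by linarith)⟩

/-! ### From a horseshoe to entropy -/

lemma entropy_of_horseshoe {n : ℕ} (hn : 1 ≤ n) {K1 K2 T : Set X}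
    (hK1c : IsCompact K1) (hK2c : IsCompact K2) (hK1n : K1.Nonempty) (hK2n : K2.Nonempty)
    (hdisj : Disjoint K1 K2) (h1 : f^[n] '' K1 = T) (h2 : f^[n] '' K2 = T)
    (hK1T : K1 ⊆ T) (hK2T : K2 ⊆ T) :
    0 < coverEntropy f Set.univ := by
  classical
  obtain ⟨r0, hr0, hsep0⟩ := EMetric.exists_pos_forall_lt_edist hK1c hK2c.isClosed hdisj
  set ε : ℝ := (r0 : ℝ) with hεdef
  have hε : 0 < ε := hr0
  have hsep : ∀ x ∈ K1, ∀ y ∈ K2, ε < dist x y := by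
    intro x hx y hy
    have := hsep0 x hx y hy
    rw [edist_dist, ← ENNReal.ofReal_coe_nnreal] at this
    exact (ENNReal.ofReal_lt_ofReal_iff_of_nonneg r0.2).mp this
  set C : Bool → Set X := fun b => bif b then K1 else K2 with hC
  have hCT : ∀ b, f^[n] '' C b = T := by intro b; cases b <;> simpa [hC]
  have hCsub : ∀ b, C b ⊆ T := by intro b; cases b <;> simpa [hC]
  have hCne : ∀ b, (C b).Nonempty := by intro b; cases b <;> simpa [hC]
  have hit : ∀ (r : ℕ) (w : ℕ → Bool), ∃ x : X, ∀ j ≤ r, f^[n * j] x ∈ C (w j) := by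
    intro r
    induction r with
    | zero =>
      intro w
      obtain ⟨x, hx⟩ := hCne (w 0)
      refine ⟨x, fun j hj => ?_⟩
      interval_cases j
      simpa using hx
    | succ r ih =>
      intro w
      obtain ⟨y, hy⟩ := ih (fun j => w (j + 1))
      have hy0 : y ∈ C (w 1) := by simpa using hy 0 (Nat.zero_le r)
      have hyT : y ∈ T := (hCsub _) hy0
      rw [← hCT (w 0)] at hyT
      obtain ⟨x, hx, hxy⟩ := hyT
      refine ⟨x, fun j hj => ?_⟩
      cases j with
      | zero => simpa using hx
      | succ j =>
        have he : n * (j + 1) = n * j + n := by ring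
        rw [he, Function.iterate_add_apply, hxy]
        exact hy j (Nat.le_of_succ_le_succ hj)
  -- choice of separated points
  have hpts : ∀ r : ℕ, ∀ w : Fin r → Bool, ∃ x : X,
      ∀ j : ℕ, ∀ hj : j < r, f^[n * j] x ∈ C (w ⟨j, hj⟩) := by
    intro r w
    obtain ⟨x, hx⟩ := hit r (fun j => if h : j < r then w ⟨j, h⟩ else false)
    refine ⟨x, fun j hj => ?_⟩
    have := hx j (le_of_lt hj)
    rwa [dif_pos hj] at this
  -- the entourage
  set U : Set (X × X) := {p : X × X | dist p.1 p.2 < ε / 2} with hU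
  have hUuni : U ∈ uniformity X := Metric.dist_mem_uniformity (by linarith)
  -- key separation of orbit points
  have hkey : ∀ (r : ℕ) (w w' : Fin r → Bool) (x x' : X),
      (∀ j : ℕ, ∀ hj : j < r, f^[n * j] x ∈ C (w ⟨j, hj⟩)) →
      (∀ j : ℕ, ∀ hj : j < r, f^[n * j] x' ∈ C (w' ⟨j, hj⟩)) → w ≠ w' →
      ∀ N : ℕ, (n * (r - 1) + 1 ≤ N) →
      Disjoint (UniformSpace.ball x (dynEntourage f U N))
        (UniformSpace.ball x' (dynEntourage f U N)) := by
    intro r w w' x x' hx hx' hww' N hN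
    obtain ⟨j0, hj0⟩ := Function.ne_iff.mp hww'
    have hj0r : (j0 : ℕ) < r := j0.2
    rw [Set.disjoint_left]
    intro z hz hz'
    have hz2 : ∀ k < N, (f^[k] x, f^[k] z) ∈ U := mem_dynEntourage.mp hz
    have hz2' : ∀ k < N, (f^[k] x', f^[k] z) ∈ U := mem_dynEntourage.mp hz'
    have hjN : n * (j0 : ℕ) < N := by
      have : (j0 : ℕ) ≤ r - 1 := by omega
      have : n * (j0 : ℕ) ≤ n * (r - 1) := Nat.mul_le_mul_left n this
      omega
    have d1 := hz2 (n * (j0 : ℕ)) hjN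
    have d2 := hz2' (n * (j0 : ℕ)) hjN
    simp only [hU, mem_setOf_eq] at d1 d2
    have hdist : dist (f^[n * (j0 : ℕ)] x) (f^[n * (j0 : ℕ)] x') < ε := by
      have := dist_triangle (f^[n * (j0 : ℕ)] x) (f^[n * (j0 : ℕ)] z) (f^[n * (j0 : ℕ)] x')
      have := dist_comm (f^[n * (j0 : ℕ)] z) (f^[n * (j0 : ℕ)] x')
      linarith [dist_comm (f^[n * (j0 : ℕ)] x') (f^[n * (j0 : ℕ)] z)]
    have hxj := hx j0 hj0r
    have hx'j := hx' j0 hj0r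
    have hj0eq : (⟨(j0 : ℕ), hj0r⟩ : Fin r) = j0 := by ext; rfl
    rw [hj0eq] at hxj hx'j
    cases hbw : w j0 with
    | false =>
      cases hbw' : w' j0 with
      | false => exact hj0 (by rw [hbw, hbw'])
      | true =>
        rw [hbw] at hxj; rw [hbw'] at hx'j
        simp only [hC, cond_false, cond_true] at hxj hx'j
        have hlt := hsep _ hx'j _ hxj
        rw [dist_comm] at hdist
        linarith
    | true =>
      cases hbw' : w' j0 with
      | true => exact hj0 (by rw [hbw, hbw'])
      | false =>
        rw [hbw] at hxj; rw [hbw'] at hx'j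
        simp only [hC, cond_false, cond_true] at hxj hx'j
        have hlt := hsep _ hxj _ hx'j
        linarith
  -- net cardinality bound
  have hmax : ∀ r : ℕ, 1 ≤ r → ∀ N : ℕ, n * (r - 1) + 1 ≤ N →
      ((2 : ℕ∞) ^ r ≤ netMaxcard f Set.univ U N) := by
    intro r hr N hN
    choose pts hpts2 using hpts r
    have hinj : Function.Injective pts := by
      intro w w' hww
      by_contra hne
      have := hkey r w w' (pts w) (pts w') (hpts2 w) (hpts2 w') hne N hN
      rw [hww, Set.disjoint_left] at this
      have hself : pts w' ∈ UniformSpace.ball (pts w') (dynEntourage f U N) := by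
        show (pts w', pts w') ∈ dynEntourage f U N
        apply mem_dynEntourage.mpr
        intro k _
        simp only [hU, mem_setOf_eq, dist_self]
        linarith
      exact this hself hself
    have hdyn : IsDynNetIn f Set.univ U N (↑(Finset.image pts Finset.univ) : Set X) := by
      constructor
      · exact Set.subset_univ _
      · intro a ha b hb hab
        simp only [Finset.coe_image, Finset.coe_univ, Set.image_univ, Set.mem_range] at ha hb
        obtain ⟨w, rfl⟩ := ha
        obtain ⟨w', rfl⟩ := hb
        have hne : w ≠ w' := fun h => hab (by rw [h])
        exact hkey r w w' (pts w) (pts w') (hpts2 w) (hpts2 w') hne N hN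
    have hcard := IsDynNetIn.card_le_netMaxcard hdyn
    have : (Finset.image pts Finset.univ).card = 2 ^ r := by
      rw [Finset.card_image_of_injective _ hinj, Finset.card_univ, Fintype.card_fun]
      simp
    rw [this] at hcard
    exact_mod_cast hcard
  -- entropy estimate
  have hn' : (0:ℝ) < n := by exact_mod_cast hn
  set c : ℝ := Real.log 2 / n with hcdef
  have hcpos : 0 < c := div_pos (Real.log_pos one_lt_two) hn'
  have hlog2 : ENNReal.log 2 = ((Real.log 2 : ℝ) : EReal) := by
    rw [show (2:ENNReal) = ENNReal.ofReal 2 by norm_num, ENNReal.log_ofReal_of_pos (by norm_num)]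
  have hperT : ∀ N : ℕ, 1 ≤ N →
      (c : EReal) ≤ ENNReal.log (netMaxcard f Set.univ U N) / (N : EReal) := by
    intro N hN
    set r : ℕ := (N - 1) / n + 1 with hrdef
    have hr1 : 1 ≤ r := Nat.le_add_left 1 _
    have hq := Nat.div_add_mod (N - 1) n
    have hmlt : (N - 1) % n < n := Nat.mod_lt _ (by omega)
    have hr1' : r - 1 = (N - 1) / n := by omega
    have hrN : n * (r - 1) + 1 ≤ N := by
      rw [hr1']
      omega
    have hNr : (N : ℝ) ≤ n * r := by
      have hrn : n * r = n * ((N - 1) / n) + n := by rw [hrdef, Nat.mul_succ]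
      have hle : N ≤ n * r := by omega
      have : (N:ℝ) ≤ ((n * r : ℕ) : ℝ) := by exact_mod_cast hle
      rw [Nat.cast_mul] at this
      linarith
    have hbound := hmax r hr1 N hrN
    have hlogb : ((r : ℕ) : EReal) * ENNReal.log 2 ≤ ENNReal.log (netMaxcard f Set.univ U N) := by
      rw [← ENNReal.log_pow]
      apply ENNReal.log_monotone
      exact_mod_cast ENat.toENNReal_le.mpr hbound
    rw [EReal.le_div_iff_mul_le (by exact_mod_cast Nat.lt_of_lt_of_le Nat.zero_lt_one hN)
      (EReal.natCast_ne_top N)]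
    refine le_trans ?_ hlogb
    rw [hlog2, ← EReal.coe_coe_eq_natCast r, ← EReal.coe_coe_eq_natCast N,
      ← EReal.coe_mul, ← EReal.coe_mul]
    apply EReal.coe_le_coe_iff.mpr
    rw [hcdef]
    rw [div_mul_eq_mul_div, div_le_iff₀ hn']
    nlinarith [Real.log_pos one_lt_two, hNr]
  have hliminf : (c : EReal) ≤ netEntropyInfEntourage f Set.univ U := by
    apply Filter.le_liminf_of_le (by isBoundedDefault)
    filter_upwards [Filter.eventually_ge_atTop 1] with N hN
    exact hperT N hN
  have hchain : (c : EReal) ≤ coverEntropy f Set.univ := by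
    refine le_trans hliminf ?_
    refine le_trans (netEntropyInfEntourage_le_netEntropyEntourage f Set.univ U) ?_
    rw [coverEntropy_eq_iSup_netEntropyEntourage]
    exact le_iSup₂ (f := fun (V : Set (X × X)) (_ : V ∈ uniformity X) =>
      netEntropyEntourage f Set.univ V) U hUuni
  exact lt_of_lt_of_le (by exact_mod_cast hcpos) hchain

/-- horseshoe from two blocks covering a common block -/
lemma entropy_of_two_cov (hf : Continuous f) {c1 c2 d1 d2 A1 A2 : ℝ}
    (h01 : 0 < A1) (hA1c : A1 < c1) (hc : c1 < c2) (hcd : c2 < d1) (hd : d1 < d2)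
    (hdA : d2 < A2) (hA2 : A2 < 1)
    (hC : ∃ m, Cov f J e m c1 c2 A1 A2) (hD : ∃ m, Cov f J e m d1 d2 A1 A2) :
    0 < coverEntropy f Set.univ := by
  obtain ⟨mc, hc'⟩ := hC
  obtain ⟨md, hd'⟩ := hD
  have hA12 : A1 ≤ A2 := by linarith
  have h0cd : Cov f J e 0 A1 A2 d1 d2 := cov_zero (by linarith) (le_of_lt hd) (by linarith)
  have h0dc : Cov f J e 0 A1 A2 c1 c2 := cov_zero hA1c (le_of_lt hc) (by linarith)
  have step1 : Cov f J e (0 + md) A1 A2 A1 A2 :=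
    cov_comp hf (by linarith) (by linarith) (by linarith) (le_of_lt hd) (by linarith) h0cd hd'
  have step2 : Cov f J e (0 + mc) A1 A2 A1 A2 :=
    cov_comp hf (by linarith) (by linarith) (by linarith) (le_of_lt hc) (by linarith) h0dc hc'
  have hCn : Cov f J e (mc + (0 + md)) c1 c2 A1 A2 :=
    cov_comp hf (by linarith) (by linarith) h01 hA12 hA2 hc' step1
  have hDn : Cov f J e (md + (0 + mc)) d1 d2 A1 A2 :=
    cov_comp hf (by linarith) (by linarith) h01 hA12 hA2 hd' step2
  set n := mc + md with hn
  have hCn' : Cov f J e n c1 c2 A1 A2 := by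
    have e1 : mc + (0 + md) = n := by omega
    rw [← e1]; exact hCn
  have hDn' : Cov f J e n d1 d2 A1 A2 := by
    have e1 : md + (0 + mc) = n := by omega
    rw [← e1]; exact hDn
  obtain ⟨s1, s2, hcs1, hs12, hs2c, himgC⟩ := hCn'
  obtain ⟨u1, u2, hdu1, hu12, hu2d, himgD⟩ := hDn'
  have hsIoo : Icc s1 s2 ⊆ Ioo (0:ℝ) 1 :=
    fun t ht => ⟨by linarith [ht.1], by linarith [ht.2]⟩
  have huIoo : Icc u1 u2 ⊆ Ioo (0:ℝ) 1 :=
    fun t ht => ⟨by linarith [ht.1], by linarith [ht.2]⟩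
  have hAIoo : Icc A1 A2 ⊆ Ioo (0:ℝ) 1 :=
    fun t ht => ⟨by linarith [ht.1], by linarith [ht.2]⟩
  have hnpos : 1 ≤ n := by
    by_contra hcon
    push_neg at hcon
    interval_cases n
    · simp only [Function.iterate_zero, Set.image_id] at himgC
      have hA1m : ι J e A1 ∈ ι J e '' Icc A1 A2 :=
        mem_image_of_mem _ ⟨le_refl _, hA12⟩
      rw [← himgC] at hA1m
      obtain ⟨t, ht, hteq⟩ := hA1m
      have : t = A1 := iota_inj (hsIoo ht) (hAIoo ⟨le_refl _, hA12⟩) hteq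
      have := ht.1
      linarith
  apply entropy_of_horseshoe (f := f) hnpos
    (K1 := ι J e '' Icc s1 s2) (K2 := ι J e '' Icc u1 u2) (T := ι J e '' Icc A1 A2)
  · exact isCompact_Icc.image_of_continuousOn (iota_cont.mono hsIoo)
  · exact isCompact_Icc.image_of_continuousOn (iota_cont.mono huIoo)
  · exact ⟨ι J e s1, mem_image_of_mem _ ⟨le_refl _, hs12⟩⟩
  · exact ⟨ι J e u1, mem_image_of_mem _ ⟨le_refl _, hu12⟩⟩
  · rw [Set.disjoint_left]
    rintro _ ⟨t, ht, rfl⟩ ⟨t', ht', hteq⟩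
    have : t' = t := iota_inj (huIoo ht') (hsIoo ht) hteq
    subst this
    have := ht.2
    have := ht'.1
    linarith
  · exact himgC
  · exact himgD
  · exact Set.image_mono (fun t ht => ⟨by linarith [ht.1], by linarith [ht.2]⟩)
  · exact Set.image_mono (fun t ht => ⟨by linarith [ht.1], by linarith [ht.2]⟩)

end Chart

end E12


theorem stmt_12 {X : Type*} [MetricSpace X] [CompactSpace X]
    (hX : HasFreeInterval X)
    (f : X → X) (hf : Continuous f) (hwm : WeaklyMixing f) :
    0 < Dynamics.coverEntropy f Set.univ := by
  obtain ⟨J, hJ, ⟨e⟩⟩ := hX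
  have hside : ∀ p1 p2 : ℝ, 0 < p1 → p1 < p2 → p2 < 1 →
      (∀ b1 b2 : ℝ, 0.05 < b1 → b1 ≤ b2 → b2 < 0.45 → ∃ m, E12.Cov f J e m p1 p2 b1 b2) ∨
      (∀ b1 b2 : ℝ, 0.55 < b1 → b1 ≤ b2 → b2 < 0.93 → ∃ m, E12.Cov f J e m p1 p2 b1 b2) :=
    fun p1 p2 h1 h2 h3 => E12.side_lemma hJ hf hwm h1 h2 h3
  have hleftify : ∀ p1 p2 q1 q2 : ℝ, 0 ≤ p1 → p2 ≤ 1 → 0.55 < q1 → q1 ≤ q2 → q2 < 0.93 →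
      (∀ b1 b2 : ℝ, 0.55 < b1 → b1 ≤ b2 → b2 < 0.93 → ∃ m, E12.Cov f J e m p1 p2 b1 b2) →
      (∀ b1 b2 : ℝ, 0.05 < b1 → b1 ≤ b2 → b2 < 0.45 → ∃ m, E12.Cov f J e m q1 q2 b1 b2) →
      (∀ b1 b2 : ℝ, 0.05 < b1 → b1 ≤ b2 → b2 < 0.45 → ∃ m, E12.Cov f J e m p1 p2 b1 b2) := by
    intro p1 p2 q1 q2 hp0 hp1 hq1 hq12 hq2 hPR hQL b1 b2 hb1 hb hb2
    obtain ⟨m1, hm1⟩ := hPR q1 q2 hq1 hq12 hq2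
    obtain ⟨m2, hm2⟩ := hQL b1 b2 hb1 hb hb2
    exact ⟨m1 + m2, E12.cov_comp hf hp0 hp1 (by linarith) hq12 (by linarith) hm1 hm2⟩
  have hfinL :
      (∀ b1 b2 : ℝ, 0.05 < b1 → b1 ≤ b2 → b2 < 0.45 → ∃ m, E12.Cov f J e m 0.1 0.2 b1 b2) →
      (∀ b1 b2 : ℝ, 0.05 < b1 → b1 ≤ b2 → b2 < 0.45 → ∃ m, E12.Cov f J e m 0.3 0.4 b1 b2) →
      0 < Dynamics.coverEntropy f Set.univ := by
    intro hL1 hL2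
    exact E12.entropy_of_two_cov hf
      (c1 := 0.1) (c2 := 0.2) (d1 := 0.3) (d2 := 0.4) (A1 := 0.06) (A2 := 0.44)
      (by norm_num) (by norm_num) (by norm_num) (by norm_num) (by norm_num) (by norm_num)
      (by norm_num)
      (hL1 0.06 0.44 (by norm_num) (by norm_num) (by norm_num))
      (hL2 0.06 0.44 (by norm_num) (by norm_num) (by norm_num))
  have hfinR :
      (∀ b1 b2 : ℝ, 0.55 < b1 → b1 ≤ b2 → b2 < 0.93 → ∃ m, E12.Cov f J e m 0.6 0.7 b1 b2) →
      (∀ b1 b2 : ℝ, 0.55 < b1 → b1 ≤ b2 → b2 < 0.93 → ∃ m, E12.Cov f J e m 0.8 0.9 b1 b2) →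
      0 < Dynamics.coverEntropy f Set.univ := by
    intro hR1 hR2
    exact E12.entropy_of_two_cov hf
      (c1 := 0.6) (c2 := 0.7) (d1 := 0.8) (d2 := 0.9) (A1 := 0.56) (A2 := 0.92)
      (by norm_num) (by norm_num) (by norm_num) (by norm_num) (by norm_num) (by norm_num)
      (by norm_num)
      (hR1 0.56 0.92 (by norm_num) (by norm_num) (by norm_num))
      (hR2 0.56 0.92 (by norm_num) (by norm_num) (by norm_num))
  rcases hside 0.6 0.7 (by norm_num) (by norm_num) (by norm_num) with hQ1L | hQ1R
  · have hP1 : ∀ b1 b2 : ℝ, 0.05 < b1 → b1 ≤ b2 → b2 < 0.45 →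
        ∃ m, E12.Cov f J e m 0.1 0.2 b1 b2 := by
      rcases hside 0.1 0.2 (by norm_num) (by norm_num) (by norm_num) with h | h
      · exact h
      · exact hleftify 0.1 0.2 0.6 0.7 (by norm_num) (by norm_num) (by norm_num) (by norm_num)
          (by norm_num) h hQ1L
    have hP2 : ∀ b1 b2 : ℝ, 0.05 < b1 → b1 ≤ b2 → b2 < 0.45 →
        ∃ m, E12.Cov f J e m 0.3 0.4 b1 b2 := by
      rcases hside 0.3 0.4 (by norm_num) (by norm_num) (by norm_num) with h | h
      · exact h
      · exact hleftify 0.3 0.4 0.6 0.7 (by norm_num) (by norm_num) (by norm_num) (by norm_num)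
          (by norm_num) h hQ1L
    exact hfinL hP1 hP2
  · rcases hside 0.8 0.9 (by norm_num) (by norm_num) (by norm_num) with hQ2L | hQ2R
    · have hP1 : ∀ b1 b2 : ℝ, 0.05 < b1 → b1 ≤ b2 → b2 < 0.45 →
          ∃ m, E12.Cov f J e m 0.1 0.2 b1 b2 := by
        rcases hside 0.1 0.2 (by norm_num) (by norm_num) (by norm_num) with h | h
        · exact h
        · exact hleftify 0.1 0.2 0.8 0.9 (by norm_num) (by norm_num) (by norm_num) (by norm_num)
            (by norm_num) h hQ2L
      have hP2 : ∀ b1 b2 : ℝ, 0.05 < b1 → b1 ≤ b2 → b2 < 0.45 →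
          ∃ m, E12.Cov f J e m 0.3 0.4 b1 b2 := by
        rcases hside 0.3 0.4 (by norm_num) (by norm_num) (by norm_num) with h | h
        · exact h
        · exact hleftify 0.3 0.4 0.8 0.9 (by norm_num) (by norm_num) (by norm_num) (by norm_num)
            (by norm_num) h hQ2L
      exact hfinL hP1 hP2
    · exact hfinR hQ1R hQ2R
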